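/- Let n ∈ ℕ with n > 1 and let γ₁,…,γₙ ∈ ℝ satisfy 0 ≤ γᵢ ≤ 1/2 for all i, at least one γᵢ ≠ 0, and γ₁ = 1/2 or Σ_{i=2}^{n} γᵢ = (n−1)γ₁. Let Ṽ_{γ₁,…,γₙ} be the normalised gonosomal operator with these parameters and R = {(x₁,…,xₙ,u) ∈ S^{n,1} : γᵢ xᵢ > 0 for some i}. Then for every initial point s ∈ R, the sequence Ṽ_{γ₁,…,γₙ}^k(s) converges in ℝ^{n+1} as k → ∞. -/

import Mathlib

open Finset

/-- The gonosomal operator with a single male genotype and parameters `γ₁,…,γₙ`,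
acting on pairs `(x, u)` with `x : Fin n → ℝ` the female genotype frequencies and
`u : ℝ` the male genotype frequency.  The coordinate of index `0` plays the role
of `x₁`. -/
noncomputable def gonOp (n : ℕ) (γ : Fin n → ℝ) (p : (Fin n → ℝ) × ℝ) :
    (Fin n → ℝ) × ℝ :=
  (fun j =>
    if (j : ℕ) = 0 then p.2 * ∑ i, γ i * p.1 i
    else p.2 * ∑ i, ((1 - 2 * γ i) / ((n : ℝ) - 1)) * p.1 i,
   p.2 * ∑ i, γ i * p.1 i)

/-- The normalised gonosomal operator with parameters `γ₁,…,γₙ`. -/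
noncomputable def ngonOp (n : ℕ) (γ : Fin n → ℝ) (p : (Fin n → ℝ) × ℝ) :
    (Fin n → ℝ) × ℝ :=
  (fun j =>
    if (j : ℕ) = 0 then (∑ i, γ i * p.1 i) / (∑ i, p.1 i)
    else (∑ i, (1 - 2 * γ i) * p.1 i) / (((n : ℝ) - 1) * ∑ i, p.1 i),
   (∑ i, γ i * p.1 i) / (∑ i, p.1 i))

/-- The set `S^{n,1}` of frequency distributions. -/
def Sn1 (n : ℕ) : Set ((Fin n → ℝ) × ℝ) :=
  {p | (∀ i, 0 ≤ p.1 i) ∧ 0 ≤ p.2 ∧ 0 < ∑ i, p.1 i ∧ 0 < p.2 ∧ (∑ i, p.1 i) + p.2 = 1}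

/-- Auxiliary: the special shape of points after one step. -/
noncomputable def qpt (n : ℕ) (t : ℝ) : (Fin n → ℝ) × ℝ :=
  (fun j => if (j : ℕ) = 0 then t else (1 - 2*t)/((n : ℝ) - 1), t)

/-- Auxiliary: the induced one-dimensional map. -/
noncomputable def fmap (n : ℕ) (γ0 g t : ℝ) : ℝ :=
  (γ0 * (((n : ℝ) - 1) * t) + g * (1 - 2*t)) / (((n : ℝ) - 1) * (1 - t))

set_option maxHeartbeats 1000000 in
theorem ngonOp_trajectory_converges (n : ℕ) (hn : 1 < n) (γ : Fin n → ℝ)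
    (hγ : ∀ i, 0 ≤ γ i ∧ γ i ≤ 1 / 2) (hne : ∃ i, γ i ≠ 0)
    (hcond : γ ⟨0, by omega⟩ = 1 / 2 ∨
      ∑ i ∈ Finset.univ.erase ⟨0, by omega⟩, γ i = ((n : ℝ) - 1) * γ ⟨0, by omega⟩)
    (s : (Fin n → ℝ) × ℝ) (hs : s ∈ {q ∈ Sn1 n | ∃ i, 0 < γ i * q.1 i}) :
    ∃ L : (Fin n → ℝ) × ℝ,
      Filter.Tendsto (fun k => (ngonOp n γ)^[k] s) Filter.atTop (nhds L) := by
  classical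
  obtain ⟨⟨hx, hupos0, hαpos, hupos, hsum1⟩, i₁, hi₁⟩ := hs
  have hn0 : 0 < n := by omega
  set i0 : Fin n := ⟨0, hn0⟩ with hi0def
  set g : ℝ := ∑ i ∈ Finset.univ.erase i0, γ i with hgdef
  have hn1 : (0:ℝ) < (n:ℝ) - 1 := by
    have : (2:ℝ) ≤ (n:ℝ) := by exact_mod_cast hn
    linarith
  have hn1ne : ((n:ℝ) - 1) ≠ 0 := ne_of_gt hn1
  have hγ0 : 0 ≤ γ i0 := (hγ i0).1
  have hγ0half : γ i0 ≤ 1/2 := (hγ i0).2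
  have hgnonneg : 0 ≤ g := Finset.sum_nonneg fun i _ => (hγ i).1
  have hcard : ((Finset.univ.erase i0).card : ℝ) = (n:ℝ) - 1 := by
    rw [Finset.card_erase_of_mem (Finset.mem_univ _), Finset.card_univ, Fintype.card_fin]
    exact Nat.cast_pred hn0
  have hghalf : g ≤ ((n:ℝ) - 1)/2 := by
    calc g ≤ ∑ _i ∈ Finset.univ.erase i0, (1/2 : ℝ) :=
          Finset.sum_le_sum fun i _ => (hγ i).2
      _ = ((n:ℝ) - 1)/2 := by rw [Finset.sum_const, nsmul_eq_mul, hcard]; ring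
  have hcond' : γ i0 = 1/2 ∨ g = ((n:ℝ) - 1) * γ i0 := hcond
  have hkey : g ≤ ((n:ℝ) - 1) * γ i0 := by
    rcases hcond' with h | h
    · rw [h]; linarith
    · linarith [h.le]
  have hγ0pos : 0 < γ i0 := by
    rcases hcond' with h | h
    · rw [h]; norm_num
    · obtain ⟨i, hi⟩ := hne
      have hipos : 0 < γ i := lt_of_le_of_ne (hγ i).1 (Ne.symm hi)
      by_cases hii : i = i0
      · rwa [hii] at hipos
      · have : γ i ≤ g :=
          Finset.single_le_sum (fun j _ => (hγ j).1)
            (Finset.mem_erase.mpr ⟨hii, Finset.mem_univ i⟩)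
        nlinarith
  -- helper for sums over the special points
  have hsum : ∀ (h : Fin n → ℝ) (t : ℝ),
      ∑ i, h i * (qpt n t).1 i = h i0 * t + (∑ i ∈ Finset.univ.erase i0, h i) * ((1 - 2*t)/((n:ℝ)-1)) := by
    intro h t
    rw [← Finset.sum_erase_add _ _ (Finset.mem_univ i0)]
    have h1 : ∀ i ∈ Finset.univ.erase i0,
        h i * (qpt n t).1 i = h i * ((1 - 2*t)/((n:ℝ)-1)) := by
      intro i hi
      have hne0 : (i : ℕ) ≠ 0 := fun h0 => (Finset.mem_erase.mp hi).1 (Fin.ext h0)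
      simp [qpt, hne0]
    rw [Finset.sum_congr rfl h1, ← Finset.sum_mul]
    have : h i0 * (qpt n t).1 i0 = h i0 * t := by simp [qpt, hi0def]
    rw [this]
    ring
  have hsum_one : ∀ t : ℝ, ∑ i, (qpt n t).1 i = 1 - t := by
    intro t
    have := hsum (fun _ => 1) t
    simp only [one_mul] at this
    rw [this, Finset.sum_const, nsmul_eq_mul, hcard]
    field_simp
    ring
  have hsum_γ : ∀ t : ℝ, ∑ i, γ i * (qpt n t).1 i = γ i0 * t + g * ((1 - 2*t)/((n:ℝ)-1)) :=
    fun t => hsum γ t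
  have hsum_b : ∀ t : ℝ, ∑ i, (1 - 2 * γ i) * (qpt n t).1 i
      = (1 - 2*γ i0) * t + (((n:ℝ)-1) - 2*g) * ((1 - 2*t)/((n:ℝ)-1)) := by
    intro t
    rw [hsum (fun i => 1 - 2 * γ i) t]
    have : ∑ i ∈ Finset.univ.erase i0, (1 - 2 * γ i) = ((n:ℝ)-1) - 2*g := by
      rw [Finset.sum_sub_distrib, Finset.sum_const, nsmul_eq_mul, hcard, ← Finset.mul_sum,
        ← hgdef]
      ring
    rw [this]
  clear_value g i0
  -- the step lemma on special points
  have hstep : ∀ t : ℝ, 0 < t → t ≤ 1/2 →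
      ngonOp n γ (qpt n t) = qpt n (fmap n (γ i0) g t) := by
    intro t ht0 hthalf
    have htne : (1 : ℝ) - t ≠ 0 := by linarith
    have hfe : (∑ i, γ i * (qpt n t).1 i) / (∑ i, (qpt n t).1 i) = fmap n (γ i0) g t := by
      rw [hsum_γ, hsum_one, fmap]
      field_simp
    have hse : (∑ i, (1 - 2 * γ i) * (qpt n t).1 i) / (((n:ℝ) - 1) * ∑ i, (qpt n t).1 i)
        = (1 - 2 * fmap n (γ i0) g t) / ((n:ℝ) - 1) := by
      rw [hsum_b, hsum_one, fmap]
      field_simp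
      ring
    refine Prod.ext ?_ ?_
    · funext j
      show (if (j : ℕ) = 0 then _ else _) = _
      by_cases hj : (j : ℕ) = 0
      · simp only [hj, if_pos, if_true, qpt]
        exact hfe
      · simp only [hj, if_false, qpt]
        exact hse
    · exact hfe
  -- initial data
  set a : ℝ := ∑ i, γ i * s.1 i with hadef
  set α : ℝ := ∑ i, s.1 i with hαdef
  have hapos : 0 < a :=
    Finset.sum_pos' (fun i _ => mul_nonneg (hγ i).1 (hx i)) ⟨i₁, Finset.mem_univ i₁, hi₁⟩
  set t₀ : ℝ := a / α with ht₀def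
  have ht₀pos : 0 < t₀ := div_pos hapos hαpos
  have ht₀half : t₀ ≤ 1/2 := by
    rw [ht₀def, div_le_iff₀ hαpos]
    have : a ≤ ∑ i, (1/2) * s.1 i :=
      Finset.sum_le_sum fun i _ => mul_le_mul_of_nonneg_right (hγ i).2 (hx i)
    rw [← Finset.mul_sum] at this
    linarith
  -- first step lands on a special point
  have hstep0 : ngonOp n γ s = qpt n t₀ := by
    have hb : ∑ i, (1 - 2 * γ i) * s.1 i = α - 2 * a := by
      have : ∀ i ∈ (Finset.univ : Finset (Fin n)),
          (1 - 2 * γ i) * s.1 i = s.1 i - 2 * (γ i * s.1 i) := fun i _ => by ring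
      rw [Finset.sum_congr rfl this, Finset.sum_sub_distrib, ← Finset.mul_sum]
    have hαne : α ≠ 0 := ne_of_gt hαpos
    refine Prod.ext ?_ ?_
    · funext j
      show (if (j : ℕ) = 0 then _ else _) = _
      by_cases hj : (j : ℕ) = 0
      · simp only [hj, if_true, qpt, ht₀def, hadef, hαdef]
      · simp only [hj, if_false, qpt]
        rw [hb, ht₀def, div_eq_div_iff (mul_ne_zero hn1ne (ne_of_gt hαpos)) hn1ne]
        field_simp
    · show a / α = t₀
      rfl
  clear_value t₀ a α
  -- properties of the one-dimensional map
  have hmaps : ∀ t : ℝ, 0 < t → t ≤ 1/2 → 0 < fmap n (γ i0) g t ∧ fmap n (γ i0) g t ≤ 1/2 := by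
    intro t ht0 hthalf
    have hden : 0 < ((n:ℝ) - 1) * (1 - t) := by nlinarith
    have hnum : 0 < γ i0 * (((n:ℝ) - 1) * t) + g * (1 - 2*t) := by
      nlinarith [mul_pos hγ0pos (mul_pos hn1 ht0),
        mul_nonneg hgnonneg (by linarith : (0:ℝ) ≤ 1 - 2*t)]
    simp only [fmap]
    constructor
    · exact div_pos hnum hden
    · rw [div_le_iff₀ hden]
      have h1 : (0:ℝ) ≤ (1/2 - γ i0) * (((n:ℝ)-1)*t) :=
        mul_nonneg (by linarith) (by positivity)
      have h2 : (0:ℝ) ≤ (((n:ℝ)-1)/2 - g) * (1 - 2*t) :=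
        mul_nonneg (by linarith) (by linarith)
      linarith [h1, h2]
  have hmono : ∀ t1 t2 : ℝ, 0 < t1 → t1 ≤ 1/2 → 0 < t2 → t2 ≤ 1/2 → t1 ≤ t2 →
      fmap n (γ i0) g t1 ≤ fmap n (γ i0) g t2 := by
    intro t1 t2 h1 h1' h2 h2' hle
    simp only [fmap]
    have hd1 : 0 < ((n:ℝ)-1)*(1-t1) := by nlinarith
    have hd2 : 0 < ((n:ℝ)-1)*(1-t2) := by nlinarith
    rw [div_le_div_iff₀ hd1 hd2]
    nlinarith [mul_nonneg hn1.le (mul_nonneg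
      (by linarith : (0:ℝ) ≤ ((n:ℝ)-1)*γ i0 - g) (by linarith : (0:ℝ) ≤ t2 - t1))]
  -- the orbit
  set u : ℕ → ℝ := fun k => (fmap n (γ i0) g)^[k] t₀ with hudef
  have husucc : ∀ k, u (k+1) = fmap n (γ i0) g (u k) := by
    intro k
    rw [hudef]
    exact Function.iterate_succ_apply' _ _ _
  have hu : ∀ k, 0 < u k ∧ u k ≤ 1/2 := by
    intro k
    induction k with
    | zero => exact ⟨ht₀pos, ht₀half⟩
    | succ k ih =>
      rw [husucc]
      exact hmaps _ ih.1 ih.2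
  have hiter : ∀ k, (ngonOp n γ)^[k+1] s = qpt n (u k) := by
    intro k
    induction k with
    | zero =>
      rw [Function.iterate_one]
      exact hstep0
    | succ k ih =>
      rw [Function.iterate_succ_apply', ih, hstep _ (hu k).1 (hu k).2, husucc]
  -- convergence of the orbit of the one-dimensional map
  have hlim : ∃ ℓ : ℝ, Filter.Tendsto u Filter.atTop (nhds ℓ) := by
    by_cases hc : u 0 ≤ u 1
    · have hm : Monotone u := by
        apply monotone_nat_of_le_succ
        intro k
        induction k with
        | zero => exact hc
        | succ k ih =>
          have h' := hmono _ _ (hu k).1 (hu k).2 (hu (k+1)).1 (hu (k+1)).2 ih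
          rwa [← husucc, ← husucc] at h'
      exact ⟨_, tendsto_atTop_ciSup hm ⟨1/2, by rintro x ⟨k, rfl⟩; exact (hu k).2⟩⟩
    · push_neg at hc
      have hm : Antitone u := by
        apply antitone_nat_of_succ_le
        intro k
        induction k with
        | zero => exact hc.le
        | succ k ih =>
          have h' := hmono _ _ (hu (k+1)).1 (hu (k+1)).2 (hu k).1 (hu k).2 ih
          rwa [← husucc, ← husucc] at h'
      exact ⟨_, tendsto_atTop_ciInf hm ⟨0, by rintro x ⟨k, rfl⟩; exact (hu k).1.le⟩⟩
  obtain ⟨ℓ, hℓ⟩ := hlim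
  refine ⟨qpt n ℓ, ?_⟩
  have hqc : Continuous (qpt n) := by
    refine Continuous.prodMk ?_ continuous_id
    refine continuous_pi fun j => ?_
    by_cases hj : (j : ℕ) = 0
    · simpa [qpt, hj] using continuous_id'
    · simp only [qpt, hj, if_false]
      exact (continuous_const.sub (continuous_const.mul continuous_id)).div_const _
  have h2 : Filter.Tendsto (fun k => qpt n (u k)) Filter.atTop (nhds (qpt n ℓ)) :=
    (hqc.tendsto ℓ).comp hℓ
  rw [← Filter.tendsto_add_atTop_iff_nat 1]
  have : (fun k => (ngonOp n γ)^[k+1] s) = fun k => qpt n (u k) := funext hiter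
  rw [this]
  exact h2
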